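/- Let A be an associative algebra, 𝔩 a Lie algebra, and ε : 𝒰(𝔩) → A an algebra homomorphism, so that 𝔩 acts on A by derivations x·a = [ε(x),a]. Then in the smash product A ∗ 𝒰(𝔩), the map α : 𝒰(𝔩) → A ∗ 𝒰(𝔩) obtained by composing the principal anti-automorphism x ↦ -x of 𝒰(𝔩) with x ↦ 1⊗x − ε(x)⊗1 restricts on the center Z(𝒰(𝔩)) to an algebra homomorphism landing in the center of A ∗ 𝒰(𝔩). -/

import Mathlib

/-!
Statement 6: Let A be an algebra, 𝔩 a Lie algebra, ε : 𝒰(𝔩) → A an algebra hom, so 𝔩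
acts on A by x·a = [ε(x), a], and let A ∗ 𝒰(𝔩) be the smash product.  The map
α : 𝒰(𝔩) → A ∗ 𝒰(𝔩) obtained by composing the principal anti-automorphism (x ↦ -x)
with ᾱ : x ↦ 1⊗x − ε(x)⊗1 restricts, on the center Z(𝒰(𝔩)), to an algebra
homomorphism landing in the center of A ∗ 𝒰(𝔩).
-/

open UniversalEnvelopingAlgebra

structure SmashProduct (A : Type) [Ring A] [Algebra ℂ A]
    (L : Type) [LieRing L] [LieAlgebra ℂ L]
    (ε : UniversalEnvelopingAlgebra ℂ L →ₐ[ℂ] A)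
    (S : Type) [Ring S] [Algebra ℂ S] where
  jA : A →ₐ[ℂ] S
  jU : UniversalEnvelopingAlgebra ℂ L →ₐ[ℂ] S
  smash_rel : ∀ (x : L) (a : A),
    jU (ι ℂ x) * jA a = jA (ε (ι ℂ x) * a - a * ε (ι ℂ x)) + jA a * jU (ι ℂ x)
  pbw : TensorProduct ℂ A (UniversalEnvelopingAlgebra ℂ L) ≃ₗ[ℂ] S
  pbw_apply : ∀ (a : A) (u : UniversalEnvelopingAlgebra ℂ L),
    pbw (a ⊗ₜ[ℂ] u) = jA a * jU u



section
attribute [local instance] LieRing.ofAssociativeRing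

set_option synthInstance.maxHeartbeats 1000000
set_option maxHeartbeats 1000000

lemma uea_adjoin_top (L : Type) [LieRing L] [LieAlgebra ℂ L] :
    Algebra.adjoin ℂ (Set.range (ι ℂ : L → UniversalEnvelopingAlgebra ℂ L)) = ⊤ := by
  set T := Algebra.adjoin ℂ (Set.range (ι ℂ : L → UniversalEnvelopingAlgebra ℂ L)) with hT
  let f : L →ₗ⁅ℂ⁆ T :=
    { toFun := fun x => ⟨ι ℂ x, Algebra.subset_adjoin ⟨x, rfl⟩⟩
      map_add' := fun x y => Subtype.ext (by simp)
      map_smul' := fun c x => Subtype.ext (by simp)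
      map_lie' := fun {x y} => Subtype.ext (by
        show (ι ℂ) ⁅x, y⁆ = _
        rw [LieHom.map_lie, Ring.lie_def]
        rfl) }
  have key : T.val.comp (lift ℂ f) = AlgHom.id ℂ _ := by
    ext x
    simp [f]
  rw [eq_top_iff]
  intro u _
  have : T.val ((lift ℂ f) u) = u := by
    have := congrArg (fun g => g u) key
    simpa using this
  rw [← this]
  exact (lift ℂ f u).2

lemma uea_induction (L : Type) [LieRing L] [LieAlgebra ℂ L]
    {p : UniversalEnvelopingAlgebra ℂ L → Prop}
    (gen : ∀ x : L, p (ι ℂ x))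
    (alg : ∀ r : ℂ, p (algebraMap ℂ _ r))
    (add : ∀ u v, p u → p v → p (u + v))
    (mul : ∀ u v, p u → p v → p (u * v))
    (u : UniversalEnvelopingAlgebra ℂ L) : p u := by
  have hu : u ∈ Algebra.adjoin ℂ (Set.range (ι ℂ : L → UniversalEnvelopingAlgebra ℂ L)) := by
    rw [uea_adjoin_top]; trivial
  exact Algebra.adjoin_induction (p := fun x _ => p x)
    (fun x hx => by obtain ⟨y, rfl⟩ := hx; exact gen y)
    alg (fun x y _ _ hx hy => add x y hx hy) (fun x y _ _ hx hy => mul x y hx hy) hu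

end

theorem alpha_central_on_center
    (A : Type) [Ring A] [Algebra ℂ A]
    (L : Type) [LieRing L] [LieAlgebra ℂ L]
    (ε : UniversalEnvelopingAlgebra ℂ L →ₐ[ℂ] A)
    (S : Type) [Ring S] [Algebra ℂ S]
    (sp : SmashProduct A L ε S)
    -- the principal anti-automorphism `can` of 𝒰(𝔩), `x ↦ -x` on generators:
    (can : UniversalEnvelopingAlgebra ℂ L →ₗ[ℂ] UniversalEnvelopingAlgebra ℂ L)
    (hcan_one : can 1 = 1)
    (hcan_mul : ∀ u v, can (u * v) = can v * can u)
    (hcan_gen : ∀ x : L, can (ι ℂ x) = - ι ℂ x)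
    -- the algebra homomorphism ᾱ : 𝒰(𝔩) → A ∗ 𝒰(𝔩), x ↦ 1⊗x − ε(x)⊗1:
    (alphaBar : UniversalEnvelopingAlgebra ℂ L →ₐ[ℂ] S)
    (halphaBar : ∀ x : L, alphaBar (ι ℂ x) = sp.jU (ι ℂ x) - sp.jA (ε (ι ℂ x))) :
    -- α := ᾱ ∘ can maps Z(𝒰(𝔩)) into Z(A ∗ 𝒰(𝔩)) and is an algebra homomorphism there:
    (∀ z ∈ Subalgebra.center ℂ (UniversalEnvelopingAlgebra ℂ L),
        alphaBar (can z) ∈ Subalgebra.center ℂ S) ∧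
    alphaBar (can 1) = 1 ∧
    (∀ z ∈ Subalgebra.center ℂ (UniversalEnvelopingAlgebra ℂ L),
      ∀ z' ∈ Subalgebra.center ℂ (UniversalEnvelopingAlgebra ℂ L),
        alphaBar (can (z * z')) = alphaBar (can z) * alphaBar (can z')) := by
  set β : UniversalEnvelopingAlgebra ℂ L → S := fun u => alphaBar (can u) with hβ
  have hβadd : ∀ u v, β (u + v) = β u + β v := fun u v => by simp [hβ]
  have hβsub : ∀ u v, β (u - v) = β u - β v := fun u v => by simp [hβ]
  have hβzero : β 0 = 0 := by simp [hβ]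
  have hβmul : ∀ u v, β (u * v) = β v * β u := fun u v => by
    simp [hβ, hcan_mul]
  have hβalg : ∀ r : ℂ, β (algebraMap ℂ _ r) = algebraMap ℂ S r := by
    intro r
    have h1 : can (algebraMap ℂ (UniversalEnvelopingAlgebra ℂ L) r)
        = algebraMap ℂ (UniversalEnvelopingAlgebra ℂ L) r := by
      rw [Algebra.algebraMap_eq_smul_one, map_smul, hcan_one]
    show alphaBar (can _) = _
    rw [h1, AlgHom.commutes]
  have hβgen : ∀ x : L, β (ι ℂ x) = sp.jA (ε (ι ℂ x)) - sp.jU (ι ℂ x) := by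
    intro x
    show alphaBar (can _) = _
    rw [hcan_gen, map_neg, halphaBar]
    abel
  -- alphaBar commutes with the image of jA
  have hA : ∀ u : UniversalEnvelopingAlgebra ℂ L, ∀ a : A,
      sp.jA a * alphaBar u = alphaBar u * sp.jA a := by
    intro u
    induction u using uea_induction with
    | gen x =>
      intro a
      rw [halphaBar, sub_mul, mul_sub, sp.smash_rel x a, ← map_mul, ← map_mul, map_sub, map_mul,
        map_mul]
      abel
    | alg r =>
      intro a
      rw [AlgHom.commutes, Algebra.commutes]
    | add u v hu hv =>
      intro a
      rw [map_add, mul_add, add_mul, hu a, hv a]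
    | mul u v hu hv =>
      intro a
      rw [map_mul, ← mul_assoc, hu a, mul_assoc, hv a, mul_assoc]
  -- the key derivation identity
  have hX : ∀ u : UniversalEnvelopingAlgebra ℂ L, ∀ x : L,
      sp.jU (ι ℂ x) * β u - β u * sp.jU (ι ℂ x) = β (ι ℂ x * u - u * ι ℂ x) := by
    intro u
    induction u using uea_induction with
    | gen y =>
      intro x
      have hbr : ι ℂ ⁅x, y⁆
          = ι ℂ x * ι ℂ y - ι ℂ y * ι ℂ x := by
        letI := LieRing.ofAssociativeRing (A := UniversalEnvelopingAlgebra ℂ L)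
        rw [LieHom.map_lie, Ring.lie_def]
      have h := sp.smash_rel x (ε (ι ℂ y))
      rw [hβgen y, ← hbr, hβgen ⁅x, y⁆, hbr, map_sub, map_mul, map_mul, map_sub, map_mul, map_mul,
        map_sub, map_mul, map_mul]
      rw [mul_sub, sub_mul, h, map_sub, map_mul, map_mul]
      abel
    | alg r =>
      intro x
      have : ι ℂ x * algebraMap ℂ (UniversalEnvelopingAlgebra ℂ L) r
          - algebraMap ℂ (UniversalEnvelopingAlgebra ℂ L) r * ι ℂ x = 0 := by
        rw [Algebra.commutes]; abel
      rw [this, hβzero, hβalg, Algebra.commutes]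
      abel
    | add u v hu hv =>
      intro x
      have harg : ι ℂ x * (u + v) - (u + v) * ι ℂ x
          = (ι ℂ x * u - u * ι ℂ x) + (ι ℂ x * v - v * ι ℂ x) := by noncomm_ring
      rw [harg, hβadd, hβadd, ← hu x, ← hv x]
      noncomm_ring
    | mul u v hu hv =>
      intro x
      have harg : ι ℂ x * (u * v) - (u * v) * ι ℂ x
          = u * (ι ℂ x * v - v * ι ℂ x) + (ι ℂ x * u - u * ι ℂ x) * v := by noncomm_ring
      rw [harg, hβadd, hβmul u (ι ℂ x * v - v * ι ℂ x), hβmul (ι ℂ x * u - u * ι ℂ x) v,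
        hβmul u v, ← hu x, ← hv x]
      noncomm_ring
  -- centrality
  have hcent : ∀ z ∈ Subalgebra.center ℂ (UniversalEnvelopingAlgebra ℂ L),
      alphaBar (can z) ∈ Subalgebra.center ℂ S := by
    intro z hz
    have hzc := Subalgebra.mem_center_iff.mp hz
    have hc1 : ∀ a : A, sp.jA a * β z = β z * sp.jA a := fun a => hA (can z) a
    have hc2gen : ∀ x : L, sp.jU (ι ℂ x) * β z = β z * sp.jU (ι ℂ x) := by
      intro x
      have h := hX z x
      have h0 : ι ℂ x * z - z * ι ℂ x = 0 := by rw [hzc (ι ℂ x)]; abel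
      rw [h0, hβzero] at h
      exact sub_eq_zero.mp h
    have hc2 : ∀ u : UniversalEnvelopingAlgebra ℂ L, sp.jU u * β z = β z * sp.jU u := by
      intro u
      induction u using uea_induction with
      | gen x => exact hc2gen x
      | alg r => rw [AlgHom.commutes, Algebra.commutes]
      | add u v hu hv => rw [map_add, add_mul, mul_add, hu, hv]
      | mul u v hu hv => rw [map_mul, mul_assoc, hv, ← mul_assoc, hu, mul_assoc]
    rw [Subalgebra.mem_center_iff]
    intro s
    have hpbw : ∀ t : TensorProduct ℂ A (UniversalEnvelopingAlgebra ℂ L),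
        sp.pbw t * β z = β z * sp.pbw t := by
      intro t
      induction t using TensorProduct.induction_on with
      | zero => simp
      | tmul a u =>
        rw [sp.pbw_apply, mul_assoc, hc2 u, ← mul_assoc, hc1 a, mul_assoc]
      | add t₁ t₂ h₁ h₂ => rw [map_add, add_mul, mul_add, h₁, h₂]
    have : s = sp.pbw (sp.pbw.symm s) := (sp.pbw.apply_symm_apply s).symm
    rw [this]
    exact hpbw (sp.pbw.symm s)
  refine ⟨hcent, ?_, ?_⟩
  · rw [hcan_one, map_one]
  · intro z hz z' hz'
    rw [hcan_mul, map_mul]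
    exact Subalgebra.mem_center_iff.mp (hcent z hz) (alphaBar (can z'))
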